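/- Let Q be weakly log-convex of moderate growth with constant C̃ := sup_{k,j}((k+j)!Q_{k+j}/(k!Q_k·j!Q_j))^{1/(k+j)} < ∞, and let L ≥ Q be weakly log-convex non-quasianalytic with L_0 = 1. Define L'_k by k!L'_k := C̃^k · min{ j!L_j · (k−j)!L_{k−j} : 0 ≤ j ≤ k }. Then: (a) L' ≥ Q; (b) k!L'_k is log-convex; (c) L'_{j+k} ≤ C̃^{j+k} L_j L_k for all j,k; (d) L' is non-quasianalytic. -/

import Mathlib

/-- `M` is weakly log-convex: `k ↦ log (k! M k)` is convex. -/
def WeaklyLogConvex (M : ℕ → ℝ) : Prop :=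
  ∀ k, (((k + 1).factorial : ℝ) * M (k + 1)) ^ 2 ≤
    ((k.factorial : ℝ) * M k) * (((k + 2).factorial : ℝ) * M (k + 2))

/-- `M` is non-quasianalytic: `∑ 1/(k! M k)^(1/k) < ∞`. -/
def NonQuasianalytic (M : ℕ → ℝ) : Prop :=
  Summable fun k : ℕ => 1 / (((k.factorial : ℝ) * M k) ^ ((1 : ℝ) / k))


private lemma ratio_mono (F : ℕ → ℝ) (Fpos : ∀ k, 0 < F k)
    (hconv : ∀ k, F (k+1)^2 ≤ F k * F (k+2)) :
    ∀ a b, a ≤ b → F (a+1) * F b ≤ F a * F (b+1) := by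
  intro a b hab
  induction b, hab using Nat.le_induction with
  | base => rw [mul_comm]
  | succ b hab ih =>
    have h1 : F (a+1) * F (b+1) * F (b+1) ≤ F a * F (b+1+1) * F (b+1) := by
      calc F (a+1) * F (b+1) * F (b+1) = F (a+1) * (F (b+1)^2) := by ring
        _ ≤ F (a+1) * (F b * F (b+2)) :=
            mul_le_mul_of_nonneg_left (hconv b) (Fpos _).le
        _ = (F (a+1) * F b) * F (b+2) := by ring
        _ ≤ (F a * F (b+1)) * F (b+2) := mul_le_mul_of_nonneg_right ih (Fpos _).le
        _ = F a * F (b+1+1) * F (b+1) := by ring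
    exact le_of_mul_le_mul_right h1 (Fpos _)

private lemma slide (F : ℕ → ℝ) (Fpos : ∀ k, 0 < F k)
    (hconv : ∀ k, F (k+1)^2 ≤ F k * F (k+2)) :
    ∀ t a b, a ≤ b → F (a+t) * F b ≤ F a * F (b+t) := by
  intro t
  induction t with
  | zero => simp
  | succ t ih =>
    intro a b hab
    have h1 := ratio_mono F Fpos hconv (a+t) (b+t) (by omega)
    have h2 := ih a b hab
    have e1 : a+(t+1) = (a+t)+1 := rfl
    have e2 : b+(t+1) = (b+t)+1 := rfl
    rw [e1, e2]
    have key : F ((a+t)+1) * F b * F (b+t) ≤ F a * F ((b+t)+1) * F (b+t) := by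
      calc F ((a+t)+1) * F b * F (b+t) = (F ((a+t)+1) * F (b+t)) * F b := by ring
        _ ≤ (F (a+t) * F ((b+t)+1)) * F b := mul_le_mul_of_nonneg_right h1 (Fpos _).le
        _ = (F (a+t) * F b) * F ((b+t)+1) := by ring
        _ ≤ (F a * F (b+t)) * F ((b+t)+1) := mul_le_mul_of_nonneg_right h2 (Fpos _).le
        _ = F a * F ((b+t)+1) * F (b+t) := by ring
    exact le_of_mul_le_mul_right key (Fpos _)

private lemma min_middle (F : ℕ → ℝ) (Fpos : ∀ k, 0 < F k)
    (hconv : ∀ k, F (k+1)^2 ≤ F k * F (k+2)) {k j : ℕ} (hjk : j ≤ k) :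
    F (k/2) * F (k - k/2) ≤ F j * F (k-j) := by
  rcases le_or_gt j (k/2) with h | h
  · have hs := slide F Fpos hconv (k/2 - j) j (k - k/2) (by omega)
    have e1 : j + (k/2 - j) = k/2 := by omega
    have e2 : (k - k/2) + (k/2 - j) = k - j := by omega
    rw [e1, e2] at hs
    exact hs
  · have hs := slide F Fpos hconv (k/2 - (k-j)) (k-j) (k - k/2) (by omega)
    have e1 : (k-j) + (k/2 - (k-j)) = k/2 := by omega
    have e2 : (k - k/2) + (k/2 - (k-j)) = j := by omega
    rw [e1, e2] at hs
    exact hs.trans_eq (mul_comm _ _)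

private lemma step_pow (F : ℕ → ℝ) (Fpos : ∀ k, 0 < F k)
    (hconv : ∀ k, F (k+1)^2 ≤ F k * F (k+2)) (hF0 : F 0 = 1) :
    ∀ q, F q ^ (q+1) ≤ F (q+1) ^ q := by
  intro q; induction q with
  | zero => simp [hF0]
  | succ q ih =>
    have h1 : (F (q+1) ^ 2) ^ (q+1) ≤ (F q * F (q+2)) ^ (q+1) :=
      pow_le_pow_left₀ (by positivity) (hconv q) _
    have h2 : F (q+1) ^ q * F (q+1) ^ (q+2) ≤ F (q+1) ^ q * F (q+2) ^ (q+1) := by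
      calc F (q+1)^q * F (q+1)^(q+2) = (F (q+1)^2)^(q+1) := by ring
        _ ≤ (F q * F (q+2))^(q+1) := h1
        _ = F q ^ (q+1) * F (q+2)^(q+1) := by rw [mul_pow]
        _ ≤ F (q+1)^q * F (q+2)^(q+1) := mul_le_mul_of_nonneg_right ih (pow_nonneg (Fpos _).le _)
    exact le_of_mul_le_mul_left h2 (pow_pos (Fpos _) _)

private lemma slope_pow (F : ℕ → ℝ) (Fpos : ∀ k, 0 < F k)
    (hconv : ∀ k, F (k+1)^2 ≤ F k * F (k+2)) (hF0 : F 0 = 1) :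
    ∀ p q, p ≤ q → F p ^ q ≤ F q ^ p := by
  intro p q hpq
  induction q, hpq using Nat.le_induction with
  | base => exact le_refl _
  | succ q hq ih =>
    rcases Nat.eq_zero_or_pos q with rfl | hq0
    · interval_cases p
      simp [hF0]
    · have h1 : (F p ^ (q+1)) ^ q ≤ (F (q+1) ^ p) ^ q := by
        calc (F p ^ (q+1))^q = (F p ^ q)^(q+1) := by ring
          _ ≤ (F q ^ p)^(q+1) := pow_le_pow_left₀ (pow_nonneg (Fpos _).le _) ih _
          _ = (F q ^ (q+1))^p := by ring
          _ ≤ (F (q+1) ^ q)^p := pow_le_pow_left₀ (pow_nonneg (Fpos _).le _) (step_pow F Fpos hconv hF0 q) _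
          _ = (F (q+1) ^ p)^q := by ring
      exact le_of_pow_le_pow_left₀ hq0.ne' (pow_nonneg (Fpos _).le _) h1

/-- For `Q` weakly log-convex of moderate growth (with constant `C`) and
`L ≥ Q` weakly log-convex non-quasianalytic with `L 0 = 1`, the sequence `L'`
given by `k! L'_k = C^k min_{0 ≤ j ≤ k} (j! L_j) ((k-j)! L_{k-j})` satisfies:
`L' ≥ Q`; `k! L'_k` is log-convex; `L'_{j+k} ≤ C^{j+k} L_j L_k`; and `L'` is
non-quasianalytic. -/
theorem stmt11 (Q L L' : ℕ → ℝ) (C : ℝ)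
    (hQpos : ∀ k, 0 < Q k) (hQ0 : Q 0 = 1) (hQw : WeaklyLogConvex Q)
    (hC1 : 1 ≤ C)
    (hC : ∀ j k : ℕ, ((j + k).factorial : ℝ) * Q (j + k) ≤
      C ^ (j + k) * ((j.factorial : ℝ) * Q j) * ((k.factorial : ℝ) * Q k))
    (hLpos : ∀ k, 0 < L k) (hL0 : L 0 = 1)
    (hLw : WeaklyLogConvex L) (hLnq : NonQuasianalytic L)
    (hQL : ∀ k, Q k ≤ L k)
    (hL' : ∀ k, (k.factorial : ℝ) * L' k =
      C ^ k * (Finset.range (k + 1)).inf' Finset.nonempty_range_add_one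
        (fun j => ((j.factorial : ℝ) * L j) * (((k - j).factorial : ℝ) * L (k - j)))) :
    (∀ k, Q k ≤ L' k) ∧ WeaklyLogConvex L' ∧
    (∀ j k, L' (j + k) ≤ C ^ (j + k) * L j * L k) ∧ NonQuasianalytic L' := by
  have hCpos : (0 : ℝ) < C := lt_of_lt_of_le one_pos hC1
  set F : ℕ → ℝ := fun m => (m.factorial : ℝ) * L m with hFdef
  have Fpos : ∀ m, 0 < F m := fun m =>
    mul_pos (by exact_mod_cast m.factorial_pos) (hLpos m)
  have Fconv : ∀ m, F (m+1)^2 ≤ F m * F (m+2) := hLw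
  have F0 : F 0 = 1 := by simp [hFdef, hL0]
  -- the min is attained at the middle
  have hG : ∀ k, (k.factorial : ℝ) * L' k = C ^ k * (F (k/2) * F (k - k/2)) := by
    intro k
    rw [hL' k]
    congr 1
    apply le_antisymm
    · exact Finset.inf'_le _ (by simp only [Finset.mem_range]; omega)
    · apply Finset.le_inf'
      intro j hj
      simp only [Finset.mem_range] at hj
      exact min_middle F Fpos Fconv (by omega : j ≤ k)
  have hGpos : ∀ k, 0 < (k.factorial : ℝ) * L' k := by
    intro k
    rw [hG k]
    exact mul_pos (pow_pos hCpos k) (mul_pos (Fpos _) (Fpos _))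
  have hL'pos : ∀ k, 0 < L' k := by
    intro k
    have hk0 : (0 : ℝ) < (k.factorial : ℝ) := by exact_mod_cast k.factorial_pos
    have h := mul_pos (inv_pos.mpr hk0) (hGpos k)
    rwa [inv_mul_cancel_left₀ (ne_of_gt hk0)] at h
  refine ⟨?_, ?_, ?_, ?_⟩
  -- (a) Q ≤ L'
  · intro k
    have hpq : k/2 + (k - k/2) = k := by omega
    have h := hC (k/2) (k - k/2)
    rw [hpq] at h
    have h2 : C ^ k * ((((k/2).factorial : ℝ)) * Q (k/2)) * ((((k - k/2).factorial : ℝ)) * Q (k - k/2))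
        ≤ (k.factorial : ℝ) * L' k := by
      rw [hG k]
      have hq1 : (((k/2).factorial : ℝ)) * Q (k/2) ≤ F (k/2) :=
        mul_le_mul_of_nonneg_left (hQL _) (by positivity)
      have hq2 : (((k - k/2).factorial : ℝ)) * Q (k - k/2) ≤ F (k - k/2) :=
        mul_le_mul_of_nonneg_left (hQL _) (by positivity)
      calc C ^ k * ((((k/2).factorial : ℝ)) * Q (k/2)) * ((((k - k/2).factorial : ℝ)) * Q (k - k/2))
          ≤ C ^ k * (F (k/2)) * ((((k - k/2).factorial : ℝ)) * Q (k - k/2)) := by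
            apply mul_le_mul_of_nonneg_right _
              (mul_pos (by positivity : (0:ℝ) < (((k - k/2).factorial : ℝ))) (hQpos _)).le
            exact mul_le_mul_of_nonneg_left hq1 (by positivity)
        _ ≤ C ^ k * (F (k/2)) * (F (k - k/2)) := by
            apply mul_le_mul_of_nonneg_left hq2 (mul_pos (pow_pos hCpos k) (Fpos _)).le
        _ = C ^ k * (F (k/2) * F (k - k/2)) := by ring
    have h3 : (k.factorial : ℝ) * Q k ≤ (k.factorial : ℝ) * L' k := le_trans h h2
    have hk0 : (0 : ℝ) < (k.factorial : ℝ) := by exact_mod_cast k.factorial_pos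
    exact le_of_mul_le_mul_left h3 hk0
  -- (b) weak log-convexity of L'
  · intro k
    rw [show ((k+1+1).factorial : ℝ) * L' (k+1+1) = ((k+2).factorial : ℝ) * L' (k+2) from rfl] at *
    rw [hG k, hG (k+1), hG (k+2)]
    obtain ⟨n, hn | hn⟩ := Nat.even_or_odd' k
    · subst hn
      have e1 : 2*n/2 = n := by omega
      have e2 : 2*n - n = n := by omega
      have e3 : (2*n+1)/2 = n := by omega
      have e4 : 2*n+1 - n = n+1 := by omega
      have e5 : (2*n+2)/2 = n+1 := by omega
      have e6 : 2*n+2 - (n+1) = n+1 := by omega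
      rw [e1, e2, e3, e4, e5, e6]
      exact le_of_eq (by ring)
    · subst hn
      have e1 : (2*n+1)/2 = n := by omega
      have e2 : 2*n+1 - n = n+1 := by omega
      have e3 : (2*n+1+1)/2 = n+1 := by omega
      have e4 : 2*n+1+1 - (n+1) = n+1 := by omega
      have e5 : (2*n+1+2)/2 = n+1 := by omega
      have e6 : 2*n+1+2 - (n+1) = n+2 := by omega
      rw [e1, e2, e3, e4, e5, e6]
      have hb := Fconv n
      calc (C ^ (2*n+1+1) * (F (n+1) * F (n+1)))^2
          = (C ^ (2*n+1+1))^2 * (F (n+1)^2 * F (n+1)^2) := by ring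
        _ ≤ (C ^ (2*n+1+1))^2 * ((F n * F (n+2)) * F (n+1)^2) := by
            apply mul_le_mul_of_nonneg_left _ (by positivity)
            exact mul_le_mul_of_nonneg_right hb (sq_nonneg _)
        _ = C ^ (2*n+1) * (F n * F (n+1)) * (C ^ (2*n+1+2) * (F (n+1) * F (n+2))) := by ring
  -- (c) L'_{j+k} ≤ C^{j+k} L_j L_k
  · intro j k
    have hjmem : j ∈ Finset.range (j + k + 1) := by
      simp only [Finset.mem_range]; omega
    have h1 : (Finset.range (j + k + 1)).inf' Finset.nonempty_range_add_one
        (fun i => ((i.factorial : ℝ) * L i) * ((((j+k) - i).factorial : ℝ) * L ((j+k) - i)))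
        ≤ ((j.factorial : ℝ) * L j) * ((((j+k) - j).factorial : ℝ) * L ((j+k) - j)) :=
      Finset.inf'_le _ hjmem
    have e1 : (j + k) - j = k := by omega
    rw [e1] at h1
    have hfac : ((j.factorial : ℝ)) * (k.factorial : ℝ) ≤ ((j+k).factorial : ℝ) := by
      exact_mod_cast Nat.le_of_dvd (j+k).factorial_pos (Nat.factorial_mul_factorial_dvd_factorial_add j k)
    have h2 : ((j+k).factorial : ℝ) * L' (j + k) ≤
        ((j+k).factorial : ℝ) * (C ^ (j+k) * L j * L k) := by
      rw [hL' (j+k)]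
      calc C ^ (j+k) * (Finset.range (j + k + 1)).inf' Finset.nonempty_range_add_one
            (fun i => ((i.factorial : ℝ) * L i) * ((((j+k) - i).factorial : ℝ) * L ((j+k) - i)))
          ≤ C ^ (j+k) * (((j.factorial : ℝ) * L j) * ((k.factorial : ℝ) * L k)) :=
            mul_le_mul_of_nonneg_left h1 (by positivity)
        _ = ((j.factorial : ℝ) * (k.factorial : ℝ)) * (C ^ (j+k) * (L j * L k)) := by ring
        _ ≤ ((j+k).factorial : ℝ) * (C ^ (j+k) * (L j * L k)) := by
            apply mul_le_mul_of_nonneg_right hfac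
            have := hLpos j; have := hLpos k
            positivity
        _ = ((j+k).factorial : ℝ) * (C ^ (j+k) * L j * L k) := by ring
    have hk0 : (0 : ℝ) < ((j+k).factorial : ℝ) := by exact_mod_cast (j+k).factorial_pos
    exact le_of_mul_le_mul_left h2 hk0
  -- (d) non-quasianalyticity of L'
  · have hU : Summable (fun m : ℕ => 1 / ((F m) ^ ((1:ℝ)/m))) := hLnq
    have h1 : Summable (fun n : ℕ => 1 / ((F (n+1)) ^ ((1:ℝ)/(n+1 : ℕ)))) :=
      (summable_nat_add_iff (f := fun m : ℕ => 1 / ((F m) ^ ((1:ℝ)/m))) 1).mpr hU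
    have hw : Summable (fun n : ℕ => 1 / ((F (n/2+1)) ^ ((1:ℝ)/((n/2+1 : ℕ) : ℝ)))) := by
      apply Summable.even_add_odd
      · have e : (fun n : ℕ => 1 / ((F (2*n/2+1)) ^ ((1:ℝ)/((2*n/2+1 : ℕ) : ℝ))))
            = fun n : ℕ => 1 / ((F (n+1)) ^ ((1:ℝ)/(n+1 : ℕ))) := by
          funext n
          have e0 : 2*n/2+1 = n+1 := by omega
          rw [e0]
        rw [e]; exact h1
      · have e : (fun n : ℕ => 1 / ((F ((2*n+1)/2+1)) ^ ((1:ℝ)/(((2*n+1)/2+1 : ℕ) : ℝ))))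
            = fun n : ℕ => 1 / ((F (n+1)) ^ ((1:ℝ)/(n+1 : ℕ))) := by
          funext n
          have e0 : (2*n+1)/2+1 = n+1 := by omega
          rw [e0]
        rw [e]; exact h1
    show Summable fun k : ℕ => 1 / (((k.factorial : ℝ) * L' k) ^ ((1:ℝ)/k))
    apply (summable_nat_add_iff (f := fun k : ℕ => 1 / (((k.factorial : ℝ) * L' k) ^ ((1:ℝ)/k))) 2).mp
    apply Summable.of_nonneg_of_le _ _ hw
    · intro n
      have := hGpos (n+2)
      positivity
    · intro n
      set k := n + 2 with hk
      have hp : k/2 = n/2 + 1 := by omega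
      set p := k/2 with hpdef
      set q := k - k/2 with hqdef
      have hpq : p ≤ q := by omega
      have hp1 : 1 ≤ p := by omega
      have hsum : p + q = k := by omega
      have hx : (0:ℝ) < F p := Fpos p
      have hy : (0:ℝ) < C ^ k * (F p * F q) :=
        mul_pos (pow_pos hCpos k) (mul_pos (Fpos _) (Fpos _))
      have hCk : (1:ℝ) ≤ C ^ k := one_le_pow₀ hC1
      have key : F p ^ k ≤ (C ^ k * (F p * F q)) ^ p := by
        calc F p ^ k = F p ^ p * F p ^ q := by rw [← pow_add, hsum]
          _ ≤ F p ^ p * F q ^ p :=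
              mul_le_mul_of_nonneg_left (slope_pow F Fpos Fconv F0 p q hpq)
                (pow_nonneg hx.le _)
          _ = (F p * F q) ^ p := (mul_pow _ _ _).symm
          _ ≤ (C ^ k * (F p * F q)) ^ p := by
              apply pow_le_pow_left₀ (mul_pos (Fpos _) (Fpos _)).le
              exact le_mul_of_one_le_left (mul_pos (Fpos _) (Fpos _)).le hCk
      have hkey : F p ^ ((1:ℝ)/(p:ℕ)) ≤ (C ^ k * (F p * F q)) ^ ((1:ℝ)/(k:ℕ)) := by
        have hp0 : ((p:ℕ):ℝ) ≠ 0 := Nat.cast_ne_zero.mpr (by omega)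
        have hk0 : ((k:ℕ):ℝ) ≠ 0 := Nat.cast_ne_zero.mpr (by omega)
        have h6 : ((F p ^ (k:ℕ))) ^ ((1:ℝ)/(((p:ℕ):ℝ)*((k:ℕ):ℝ)))
            ≤ ((C ^ k * (F p * F q)) ^ (p:ℕ)) ^ ((1:ℝ)/(((p:ℕ):ℝ)*((k:ℕ):ℝ))) :=
          Real.rpow_le_rpow (by positivity) key (by positivity)
        rw [← Real.rpow_natCast (F p) k, ← Real.rpow_natCast (C ^ k * (F p * F q)) p,
          ← Real.rpow_mul hx.le, ← Real.rpow_mul hy.le] at h6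
        have e7 : ((k:ℕ):ℝ) * ((1:ℝ)/(((p:ℕ):ℝ)*((k:ℕ):ℝ))) = (1:ℝ)/((p:ℕ):ℝ) := by
          field_simp
        have e8 : ((p:ℕ):ℝ) * ((1:ℝ)/(((p:ℕ):ℝ)*((k:ℕ):ℝ))) = (1:ℝ)/((k:ℕ):ℝ) := by
          field_simp
        rw [e7, e8] at h6
        exact h6
      have hfin : 1 / (((k.factorial : ℝ) * L' k) ^ ((1:ℝ)/(k:ℕ)))
          ≤ 1 / (F p ^ ((1:ℝ)/(p:ℕ))) := by
        rw [hG k]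
        exact one_div_le_one_div_of_le (Real.rpow_pos_of_pos hx _) hkey
      calc 1 / (((k.factorial : ℝ) * L' k) ^ ((1:ℝ)/((n+2:ℕ):ℝ)))
          = 1 / (((k.factorial : ℝ) * L' k) ^ ((1:ℝ)/(k:ℕ))) := by rw [hk]
        _ ≤ 1 / (F p ^ ((1:ℝ)/(p:ℕ))) := hfin
        _ = 1 / (F (n/2+1) ^ ((1:ℝ)/((n/2+1:ℕ):ℝ))) := by rw [hp]
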